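/- There exists a computable function z : ℕ → ℕ → ℚ (computable as a function of the pair (n, i)) such that each sequence i ↦ z n i is a quickly converging Cauchy sequence of rationals, but there is no computable function f : ℕ → Bool such that for all n, f n = true if and only if Filter.Tendsto (fun i => ((z n i : ℝ))) Filter.atTop (nhds 0). In other words, deciding whether the real number represented by the n-th sequence equals zero is not computable, so no computable sequence of Jordan canonical forms for the matrices M(z_n) can exist. -/

import Mathlib

open Encodable Denumerable Filter

namespace ZeroTest

/-! ### gcd is primitive recursive (via bounded iteration) -/

private def gstep : ℕ × ℕ → ℕ × ℕ := fun p => if p.1 = 0 then p else (p.2 % p.1, p.1)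

private lemma gstep_iterate : ∀ k a b, a ≤ k → gstep^[k + 1] (a, b) = (0, Nat.gcd a b) := by
  intro k
  induction k using Nat.strong_induction_on with
  | _ k ih =>
    intro a b hak
    cases a with
    | zero =>
      have hfix : ∀ m, gstep^[m] ((0 : ℕ), b) = (0, b) := by
        intro m; induction m with
        | zero => rfl
        | succ m ihm => rw [Function.iterate_succ_apply, gstep]; simp [ihm]
      simp [hfix]
    | succ a =>
      rcases k with _ | k
      · omega
      rw [Function.iterate_succ_apply]
      have h1 : gstep (a + 1, b) = (b % (a + 1), a + 1) := by simp [gstep]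
      rw [h1]
      have h2 : b % (a + 1) ≤ k := by
        have := Nat.mod_lt b (show 0 < a + 1 by omega); omega
      rw [ih k (by omega) _ _ h2]
      rw [Nat.gcd_rec (a+1) b]

private lemma primrec_gcd : Primrec₂ Nat.gcd := by
  have hstep : Primrec gstep :=
    Primrec.ite (Primrec.eq.comp Primrec.fst (Primrec.const 0)) Primrec.id
      (Primrec.pair (Primrec.nat_mod.comp Primrec.snd Primrec.fst) Primrec.fst)
  have h : Primrec fun p : ℕ × ℕ => (gstep^[p.1 + 1] p).2 :=
    Primrec.snd.comp
      (Primrec.nat_iterate (Primrec.succ.comp Primrec.fst) Primrec.id (hstep.comp Primrec.snd))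
  exact h.of_eq fun p => by rw [show p = (p.1, p.2) from rfl, gstep_iterate p.1 p.1 p.2 le_rfl]

/-! ### Explicit description of the encoding of ℚ -/

lemma natAbs_encode : ∀ z : ℤ, z.natAbs = encode z / 2 + encode z % 2 := by
  intro z
  cases z with
  | ofNat n =>
    have h : encode ((n : ℤ)) = 2 * n := rfl
    simp [h]
  | negSucc n =>
    have h : encode (Int.negSucc n) = 2 * n + 1 := rfl
    simp [h]
    omega

lemma natAbs_ofNat (x : ℕ) : (Denumerable.ofNat ℤ x).natAbs = x / 2 + x % 2 := by
  conv_rhs => rw [← Denumerable.encode_ofNat (α := ℤ) x]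
  exact natAbs_encode _

def ratP (k : ℕ) : Bool :=
  decide (0 < k.unpair.2) && (Nat.gcd (k.unpair.1 / 2 + k.unpair.1 % 2) k.unpair.2 == 1)

lemma mem_range_iff (k : ℕ) :
    k ∈ Set.range (@encode ℚ Rat.instEncodable) ↔ ratP k = true := by
  constructor
  · rintro ⟨q, rfl⟩
    have hE : @encode ℚ Rat.instEncodable q = Nat.pair (encode q.num) q.den := rfl
    rw [hE]
    simp only [ratP, Nat.unpair_pair, Bool.and_eq_true, decide_eq_true_eq, beq_iff_eq]
    refine ⟨q.pos, ?_⟩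
    have := natAbs_encode q.num
    rw [← this]
    exact q.reduced
  · intro h
    simp only [ratP, Bool.and_eq_true, decide_eq_true_eq, beq_iff_eq] at h
    obtain ⟨hpos, hcop⟩ := h
    set z := Denumerable.ofNat ℤ k.unpair.1 with hz
    have hc : z.natAbs.Coprime k.unpair.2 := by
      rw [Nat.Coprime, hz, natAbs_ofNat]; exact hcop
    refine ⟨⟨z, k.unpair.2, hpos.ne', hc⟩, ?_⟩
    have hE : @encode ℚ Rat.instEncodable ⟨z, k.unpair.2, hpos.ne', hc⟩ =
        Nat.pair (encode z) k.unpair.2 := rfl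
    rw [hE, hz, Denumerable.encode_ofNat, Nat.pair_unpair]

def cnt (N : ℕ) : ℕ := Nat.rec 0 (fun k ih => ih + (bif ratP k then 1 else 0)) N

lemma cnt_eq (N : ℕ) : cnt N = (List.range N).countP ratP := by
  induction N with
  | zero => rfl
  | succ N ih =>
    have : cnt (N+1) = cnt N + (bif ratP N then 1 else 0) := rfl
    rw [this, ih, List.range_succ, List.countP_append]
    cases h : ratP N <;> simp [List.countP_cons, h]

lemma encode_q_eq (q : ℚ) :
    @encode ℚ (Primcodable.toEncodable) q = cnt (Nat.pair (encode q.num) q.den) := by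
  have h0 : @encode ℚ (Primcodable.toEncodable) q =
      (List.range (@encode ℚ Rat.instEncodable q)).countP
        (fun k => @decide (k ∈ Set.range (@encode ℚ Rat.instEncodable))
          (Encodable.decidableRangeEncode ℚ k)) := rfl
  have hE : @encode ℚ Rat.instEncodable q = Nat.pair (encode q.num) q.den := rfl
  rw [h0, hE, cnt_eq]
  congr 1
  funext k
  by_cases h : k ∈ Set.range (@encode ℚ Rat.instEncodable)
  · simp [h, (mem_range_iff k).mp h]
  · have hr : ratP k = false :=
      (Bool.not_eq_true _).mp (fun hh => h ((mem_range_iff k).mpr hh))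
    simp [h, hr]

lemma encode_half_pow (m : ℕ) :
    @encode ℚ (Primcodable.toEncodable) ((2:ℚ)⁻¹ ^ m) = cnt (Nat.pair 2 (2 ^ m)) := by
  rw [encode_q_eq]
  have h1 : ((2:ℚ)⁻¹ ^ m).num = 1 := by rw [Rat.num_pow]; norm_num
  have h2 : ((2:ℚ)⁻¹ ^ m).den = 2 ^ m := by rw [Rat.den_pow]; norm_num
  rw [h1, h2]
  rfl

/-! ### Primitive recursiveness of m ↦ 2⁻¹ ^ m in ℚ -/

lemma primrec_ratP : Primrec ratP := by
  have hu1 : Primrec fun k : ℕ => k.unpair.1 := Primrec.fst.comp Primrec.unpair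
  have hu2 : Primrec fun k : ℕ => k.unpair.2 := Primrec.snd.comp Primrec.unpair
  have ha : Primrec fun k : ℕ => k.unpair.1 / 2 + k.unpair.1 % 2 :=
    Primrec.nat_add.comp (Primrec.nat_div.comp hu1 (Primrec.const 2))
      (Primrec.nat_mod.comp hu1 (Primrec.const 2))
  have h1 : Primrec fun k : ℕ => decide (0 < k.unpair.2) :=
    (Primrec.nat_lt.comp (Primrec.const 0) hu2).decide
  have h2 : Primrec fun k : ℕ =>
      (Nat.gcd (k.unpair.1 / 2 + k.unpair.1 % 2) k.unpair.2 == 1) :=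
    Primrec.beq.comp (primrec_gcd.comp ha hu2) (Primrec.const 1)
  exact (Primrec.dom_bool₂ (· && ·)).comp h1 h2

lemma primrec_cnt : Primrec cnt := by
  have h := Primrec.nat_rec (f := fun _ : ℕ => (0:ℕ))
    (g := fun (_ : ℕ) (p : ℕ × ℕ) => p.2 + (bif ratP p.1 then 1 else 0)) (Primrec.const 0)
    (Primrec.nat_add.comp (Primrec.snd.comp Primrec.snd)
      (Primrec.cond (primrec_ratP.comp (Primrec.fst.comp Primrec.snd))
        (Primrec.const 1) (Primrec.const 0))).to₂
  exact (h.comp Primrec.id Primrec.id).of_eq fun n => rfl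

lemma primrec_pow2 : Primrec fun m : ℕ => 2 ^ m := by
  have h := Primrec.nat_rec (f := fun _ : ℕ => (1:ℕ))
    (g := fun (_ : ℕ) (p : ℕ × ℕ) => p.2 * 2) (Primrec.const 1)
    (Primrec.nat_mul.comp (Primrec.snd.comp Primrec.snd) (Primrec.const 2)).to₂
  exact (h.comp Primrec.id Primrec.id).of_eq fun n => by
    induction n with
    | zero => rfl
    | succ n ih =>
      show (Nat.rec 1 (fun _ IH => IH * 2) n : ℕ) * 2 = 2 ^ (n + 1)
      rw [show (Nat.rec 1 (fun _ IH => IH * 2) n : ℕ) = 2 ^ n from ih, pow_succ]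

lemma primrec_half_pow : Primrec fun m : ℕ => (2:ℚ)⁻¹ ^ m := by
  rw [← Primrec.encode_iff]
  have h : Primrec fun m : ℕ => cnt (Nat.pair 2 (2 ^ m)) :=
    primrec_cnt.comp (Primrec₂.natPair.comp (Primrec.const 2) primrec_pow2)
  exact h.of_eq fun m => (encode_half_pow m).symm

/-! ### The construction -/

def hb (n k : ℕ) : Bool :=
  (Nat.Partrec.Code.evaln k (Denumerable.ofNat Nat.Partrec.Code n) 0).isSome

def mu (n i : ℕ) : ℕ := Nat.rec 0 (fun k ih => ih + (bif hb n k then 0 else 1)) i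

lemma mu_succ (n i : ℕ) : mu n (i+1) = mu n i + (bif hb n i then 0 else 1) := rfl

lemma hb_mono {n k k' : ℕ} (h : k ≤ k') (hk : hb n k = true) : hb n k' = true := by
  unfold hb at *
  obtain ⟨x, hx⟩ := Option.isSome_iff_exists.mp hk
  exact Option.isSome_iff_exists.mpr ⟨x, Nat.Partrec.Code.evaln_mono h hx⟩

lemma mu_le (n i : ℕ) : mu n i ≤ i := by
  induction i with
  | zero => exact le_rfl
  | succ i ih => rw [mu_succ]; cases hb n i <;> simp <;> omega

lemma mu_mono (n : ℕ) {i j : ℕ} (h : i ≤ j) : mu n i ≤ mu n j := by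
  induction j with
  | zero =>
    have : i = 0 := by omega
    subst this; exact le_rfl
  | succ j ih =>
    rcases Nat.lt_or_ge i (j+1) with hlt | hge
    · have := ih (by omega)
      rw [mu_succ]; cases hb n j <;> simp <;> omega
    · have : i = j + 1 := by omega
      subst this; exact le_rfl

lemma mu_freeze {n k i : ℕ} (hk : hb n k = true) (hki : k < i) :
    ∀ j, i ≤ j → mu n j = mu n i := by
  intro j hj
  induction j with
  | zero => omega
  | succ j ih =>
    rcases Nat.lt_or_ge j i with hlt | hge
    · have : i = j + 1 := by omega
      rw [this]
    · rw [mu_succ, ih hge, hb_mono (show k ≤ j by omega) hk]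
      rfl

lemma mu_eq_self {n i : ℕ} (h : ∀ k < i, hb n k = false) : mu n i = i := by
  induction i with
  | zero => rfl
  | succ i ih =>
    rw [mu_succ, ih (fun k hk => h k (by omega)), h i (by omega)]
    rfl

noncomputable def zz (n i : ℕ) : ℚ := (2:ℚ)⁻¹ ^ mu n i

lemma primrec_mu : Primrec₂ mu := by
  have hhb : Primrec₂ hb := by
    have : Primrec fun p : ℕ × ℕ =>
        (Nat.Partrec.Code.evaln p.2 (Denumerable.ofNat Nat.Partrec.Code p.1) 0) :=
      Nat.Partrec.Code.primrec_evaln.comp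
        ((Primrec.snd.pair ((Primrec.ofNat Nat.Partrec.Code).comp Primrec.fst)).pair
          (Primrec.const 0))
    exact (Primrec.option_isSome.comp this).to₂
  have h := Primrec.nat_rec (f := fun _ : ℕ => (0:ℕ))
    (g := fun (n : ℕ) (p : ℕ × ℕ) => p.2 + (bif hb n p.1 then 0 else 1)) (Primrec.const 0)
    (Primrec.nat_add.comp (Primrec.snd.comp Primrec.snd)
      (Primrec.cond (hhb.comp Primrec.fst (Primrec.fst.comp Primrec.snd))
        (Primrec.const 0) (Primrec.const 1))).to₂
  exact h.of_eq fun n i => rfl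

lemma computable_zz : Computable (fun p : ℕ × ℕ => zz p.1 p.2) :=
  (primrec_half_pow.comp (primrec_mu : Primrec fun p : ℕ × ℕ => mu p.1 p.2)).to_comp

lemma zz_cauchy (n i j : ℕ) (h : i ≤ j) : |zz n i - zz n j| ≤ (2:ℚ)⁻¹ ^ i := by
  have hmono := mu_mono n h
  have hple : (2:ℚ)⁻¹ ^ mu n j ≤ (2:ℚ)⁻¹ ^ mu n i :=
    pow_le_pow_of_le_one (by norm_num) (by norm_num) hmono
  have habs : |zz n i - zz n j| = zz n i - zz n j := abs_of_nonneg (by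
    simp only [zz]; linarith)
  by_cases hc : ∃ k < i, hb n k = true
  · obtain ⟨k, hki, hk⟩ := hc
    rw [habs, zz, zz, mu_freeze hk hki j h]
    simp only [sub_self]
    positivity
  · push_neg at hc
    have hi : mu n i = i := mu_eq_self (fun k hk => by
      have := hc k hk; exact (Bool.not_eq_true _).mp this)
    rw [habs, zz, zz, hi]
    have : (0:ℚ) ≤ (2:ℚ)⁻¹ ^ mu n j := by positivity
    linarith

lemma tendsto_iff (n : ℕ) :
    Tendsto (fun i => ((zz n i : ℚ) : ℝ)) atTop (nhds 0) ↔
      ¬((Denumerable.ofNat Nat.Partrec.Code n).eval 0).Dom := by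
  have hdom : ((Denumerable.ofNat Nat.Partrec.Code n).eval 0).Dom ↔ ∃ k, hb n k = true := by
    rw [Part.dom_iff_mem]
    constructor
    · rintro ⟨x, hx⟩
      obtain ⟨k, hk⟩ := Nat.Partrec.Code.evaln_complete.mp hx
      exact ⟨k, Option.isSome_iff_exists.mpr ⟨x, hk⟩⟩
    · rintro ⟨k, hk⟩
      obtain ⟨x, hx⟩ := Option.isSome_iff_exists.mp hk
      exact ⟨x, Nat.Partrec.Code.evaln_complete.mpr ⟨k, hx⟩⟩
  constructor
  · intro ht hDom
    obtain ⟨k, hk⟩ := hdom.mp hDom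
    have heq : ∀ j, k + 1 ≤ j → zz n j = (2:ℚ)⁻¹ ^ mu n (k+1) := by
      intro j hj
      rw [zz, mu_freeze hk (Nat.lt_succ_self k) j hj]
    have ht2 : Tendsto (fun i => ((zz n i : ℚ) : ℝ)) atTop
        (nhds (((2:ℚ)⁻¹ ^ mu n (k+1) : ℚ) : ℝ)) := by
      refine Tendsto.congr' ?_ tendsto_const_nhds
      filter_upwards [eventually_ge_atTop (k+1)] with j hj
      rw [heq j hj]
    have := tendsto_nhds_unique ht2 ht
    have hne : (((2:ℚ)⁻¹ ^ mu n (k+1) : ℚ) : ℝ) ≠ 0 := by positivity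
    exact hne this
  · intro hDom
    have hall : ∀ k, hb n k = false := by
      intro k
      by_contra h
      exact hDom (hdom.mpr ⟨k, (Bool.not_eq_false _).mp h⟩)
    have heq : ∀ i, ((zz n i : ℚ) : ℝ) = ((2:ℝ)⁻¹) ^ i := by
      intro i
      rw [zz, mu_eq_self (fun k _ => hall k)]
      push_cast
      norm_num
    simp only [heq]
    exact tendsto_pow_atTop_nhds_zero_of_lt_one (by norm_num) (by norm_num)

end ZeroTest

theorem zero_testing_not_computable :
    ∃ z : ℕ → ℕ → ℚ,
      Computable (fun p : ℕ × ℕ => z p.1 p.2) ∧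
      (∀ n i j, i ≤ j → |z n i - z n j| ≤ (2 : ℚ)⁻¹ ^ i) ∧
      ¬∃ f : ℕ → Bool, Computable f ∧
        ∀ n, f n = true ↔
          Filter.Tendsto (fun i => ((z n i : ℝ))) Filter.atTop (nhds 0) := by
  refine ⟨ZeroTest.zz, ZeroTest.computable_zz, ZeroTest.zz_cauchy, ?_⟩
  rintro ⟨f, hf, hiff⟩
  have hP : ComputablePred fun c : Nat.Partrec.Code => (c.eval 0).Dom := by
    rw [ComputablePred.computable_iff]
    refine ⟨fun c => !(f (Encodable.encode c)), ?_, ?_⟩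
    · exact (Primrec.not.to_comp).comp (hf.comp Computable.encode)
    · funext c
      have h1 := hiff (Encodable.encode c)
      rw [ZeroTest.tendsto_iff] at h1
      rw [Denumerable.ofNat_encode] at h1
      by_cases hd : (c.eval 0).Dom
      · have : f (Encodable.encode c) = false :=
          (Bool.not_eq_true _).mp (fun ht => (h1.mp ht) hd)
        simp [hd, this]
      · have : f (Encodable.encode c) = true := h1.mpr hd
        simp [hd, this]
  exact ComputablePred.halting_problem 0 hP
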